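/- Let S be a linearization of a history F = E·E' (concatenation), obtained via an extension F' of F, and let S_E be the shortest prefix of S containing all operations complete in E. Then S_E contains no operation whose invocation appears in E'. -/

import Mathlib

namespace RV

inductive Event where
  | inv (p : ℕ) (op : ℕ)
  | res (p : ℕ) (op : ℕ)
deriving DecidableEq

abbrev History := List Event

def Event.proc : Event → ℕ
  | .inv p _ => p
  | .res p _ => p

def Event.op : Event → ℕ
  | .inv _ o => o
  | .res _ o => o

def Event.isInv : Event → Bool
  | .inv _ _ => true
  | .res _ _ => false

/-- The subsequence of events of process `p`. -/
def proj (E : History) (p : ℕ) : History := E.filter (fun e => e.proc == p)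

/-- Two histories are equivalent if every process has the same subsequence of events. -/
def Equivalent (E F : History) : Prop := ∀ p, proj E p = proj F p

/-- Operation `a` precedes operation `b` in `E`: the response of `a` occurs
before the invocation of `b`. -/
def prec (E : History) (a b : ℕ) : Prop :=
  ∃ i j p q, i < j ∧ E[(i : ℕ)]? = some (Event.res p a) ∧ E[(j : ℕ)]? = some (Event.inv q b)

/-- A single process' subsequence alternates invocation, matching response, ... ,
possibly ending with a pending invocation. -/
inductive Alt : History → Prop where
  | nil : Alt []
  | pend (p o : ℕ) : Alt [Event.inv p o]
  | step (p o : ℕ) (l : History) : Alt l → Alt (Event.inv p o :: Event.res p o :: l)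

/-- Well-formed history: per-process alternation, and every operation identifier is
invoked at most once and responded at most once. -/
def WellFormed (E : History) : Prop :=
  (∀ p, Alt (proj E p)) ∧
  (∀ o, E.countP (fun e => e.isInv && e.op == o) ≤ 1) ∧
  (∀ o, E.countP (fun e => !e.isInv && e.op == o) ≤ 1)

def CompleteIn (E : History) (o : ℕ) : Prop :=
  (∃ p, Event.inv p o ∈ E) ∧ ∃ q, Event.res q o ∈ E

def PendingIn (E : History) (o : ℕ) : Prop :=
  (∃ p, Event.inv p o ∈ E) ∧ ∀ q, Event.res q o ∉ E

def hasRes (E : History) (o : ℕ) : Bool := E.any (fun e => !e.isInv && e.op == o)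

/-- `comp E` removes the invocations of pending operations. -/
def comp (E : History) : History := E.filter (fun e => !e.isInv || hasRes E e.op)

/-- `E'` extends `E` by appending responses to some pending operations. -/
def IsExtension (E E' : History) : Prop :=
  ∃ rs : History, E' = E ++ rs ∧
    (∀ e ∈ rs, e.isInv = false ∧ PendingIn E e.op ∧ Event.inv e.proc e.op ∈ E) ∧
    rs.Pairwise (fun a b => a.op ≠ b.op)

/-- Sequential histories: alternating invocation/matching-response pairs. -/
inductive Seq : History → Prop where
  | nil : Seq []
  | step (p o : ℕ) (l : History) : Seq l → Seq (Event.inv p o :: Event.res p o :: l)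

/-- `E` is linearizable w.r.t. the sequential object `O` (a set of sequential
histories): there is an extension `E'` of `E` and `S ∈ O` such that `comp E'`
and `S` are equivalent and `<_{comp E'} ⊆ <_S`. -/
def Linearizable (O : Set History) (E : History) : Prop :=
  ∃ E', IsExtension E E' ∧ ∃ S ∈ O, Equivalent (comp E') S ∧
    ∀ a b, prec (comp E') a b → prec S a b

/-- `E` is similar to `F`: some history `E'`, obtained from `E` by appending
responses to some pending operations and removing the invocations of some other
pending operations, is equivalent to `F` and satisfies `≺_{E'} ⊆ ≺_F`. -/
def Similar (E F : History) : Prop :=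
  ∃ (keep : Event → Bool) (rs : History),
    (∀ e ∈ E, keep e = false → e.isInv = true ∧ PendingIn E e.op) ∧
    (∀ e ∈ rs, e.isInv = false ∧ PendingIn E e.op ∧ Event.inv e.proc e.op ∈ E ∧
      keep (Event.inv e.proc e.op) = true) ∧
    rs.Pairwise (fun a b => a.op ≠ b.op) ∧
    Equivalent (E.filter keep ++ rs) F ∧
    (∀ a b, prec (E.filter keep ++ rs) a b → prec F a b)

/-- The class `GenLin`: sets of well-formed histories closed under prefixes and
under similarity. -/
def GenLin (O : Set History) : Prop :=
  (∀ F ∈ O, ∀ E : History, E <+: F → E ∈ O) ∧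
  (∀ F ∈ O, ∀ E : History, Similar E F → E ∈ O)

lemma two_le_countP {l : List Event} {P : Event → Bool} {i j : ℕ} {a b : Event}
    (hi : l[i]? = some a) (hj : l[j]? = some b) (hij : i < j)
    (ha : P a = true) (hb : P b = true) : 2 ≤ l.countP P := by
  have h1 : a ∈ l.take (i+1) := by
    refine List.mem_of_getElem? (i := i) ?_
    rw [List.getElem?_take_of_lt (Nat.lt_succ_self i)]; exact hi
  have h2 : b ∈ l.drop (i+1) := by
    refine List.mem_of_getElem? (i := j - (i+1)) ?_
    rw [List.getElem?_drop]
    have he : i + 1 + (j - (i+1)) = j := by omega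
    rw [he]; exact hj
  have c1 : 0 < (l.take (i+1)).countP P := List.countP_pos_iff.mpr ⟨a, h1, ha⟩
  have c2 : 0 < (l.drop (i+1)).countP P := List.countP_pos_iff.mpr ⟨b, h2, hb⟩
  have hc := List.countP_append (p := P) (l₁ := l.take (i+1)) (l₂ := l.drop (i+1))
  rw [List.take_append_drop] at hc
  omega

lemma two_le_countP_of_ne {l : List Event} {P : Event → Bool} {a b : Event}
    (hane : a ≠ b) (hal : a ∈ l) (hbl : b ∈ l)
    (ha : P a = true) (hb : P b = true) : 2 ≤ l.countP P := by
  obtain ⟨i, hi⟩ := List.mem_iff_getElem?.mp hal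
  obtain ⟨j, hj⟩ := List.mem_iff_getElem?.mp hbl
  rcases lt_trichotomy i j with h | h | h
  · exact two_le_countP hi hj h ha hb
  · subst h; rw [hi] at hj; cases hj; exact absurd rfl hane
  · exact two_le_countP hj hi h hb ha

lemma filter_prec {l : List Event} {pred : Event → Bool} {i j : ℕ} {a b : Event}
    (hi : l[i]? = some a) (hj : l[j]? = some b) (hij : i < j)
    (ha : pred a = true) (hb : pred b = true) :
    ∃ i' j', i' < j' ∧ (l.filter pred)[(i' : ℕ)]? = some a ∧
      (l.filter pred)[(j' : ℕ)]? = some b := by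
  have hsplit : l.filter pred = (l.take (i+1)).filter pred ++ (l.drop (i+1)).filter pred := by
    rw [← List.filter_append, List.take_append_drop]
  have h1 : a ∈ (l.take (i+1)).filter pred := by
    refine List.mem_filter.mpr ⟨?_, ha⟩
    refine List.mem_of_getElem? (i := i) ?_
    rw [List.getElem?_take_of_lt (Nat.lt_succ_self i)]; exact hi
  have h2 : b ∈ (l.drop (i+1)).filter pred := by
    refine List.mem_filter.mpr ⟨?_, hb⟩
    refine List.mem_of_getElem? (i := j - (i+1)) ?_
    rw [List.getElem?_drop]
    have he : i + 1 + (j - (i+1)) = j := by omega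
    rw [he]; exact hj
  obtain ⟨i', hi'⟩ := List.mem_iff_getElem?.mp h1
  obtain ⟨j'', hj''⟩ := List.mem_iff_getElem?.mp h2
  have hi'len : i' < ((l.take (i+1)).filter pred).length := (List.getElem?_eq_some_iff.mp hi').1
  refine ⟨i', ((l.take (i+1)).filter pred).length + j'', by omega, ?_, ?_⟩
  · rw [hsplit, List.getElem?_append_left hi'len]; exact hi'
  · rw [hsplit, List.getElem?_append_right (Nat.le_add_right _ _)]
    have he : ((l.take (i+1)).filter pred).length + j'' - ((l.take (i+1)).filter pred).length
        = j'' := by omega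
    rw [he]; exact hj''

lemma Seq.res_has_inv : ∀ {S : History}, Seq S → ∀ n p a,
    S[n]? = some (Event.res p a) →
    1 ≤ n ∧ S[(n-1)]? = some (Event.inv p a) := by
  intro S h
  induction h with
  | nil => intro n p a hn; simp at hn
  | step q o l _ ih =>
    intro n p a hn
    match n with
    | 0 => simp at hn
    | 1 =>
      simp at hn
      obtain ⟨rfl, rfl⟩ := hn
      exact ⟨le_refl 1, rfl⟩
    | (m+2) =>
      have hn' : l[m]? = some (Event.res p a) := hn
      obtain ⟨h1, h2⟩ := ih m p a hn'
      refine ⟨by omega, ?_⟩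
      have he : m + 2 - 1 = (m - 1) + 2 := by omega
      rw [he]
      exact h2

/-- Let `S` be a linearization of `F = E ++ E'` obtained via an
extension `F'` of `F`, and let `SE` be the shortest prefix of `S` containing all
operations complete in `E`. Then `SE` contains no operation whose invocation
appears in `E'`. -/
theorem shortest_prefix_avoids_suffix_ops (E E' F F' S SE : History)
    (hF : F = E ++ E')
    (hwf : WellFormed F)
    (hext : IsExtension F F')
    (hseq : Seq S)
    (hequiv : Equivalent (comp F') S)
    (hmono : ∀ a b, prec (comp F') a b → prec S a b)
    (hSE : SE <+: S)
    (hall : ∀ o, CompleteIn E o → ∃ p, Event.inv p o ∈ SE)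
    (hmin : ∀ T, T <+: S → (∀ o, CompleteIn E o → ∃ p, Event.inv p o ∈ T) →
      SE.length ≤ T.length) :
    ∀ o, (∃ p, Event.inv p o ∈ E') → ∀ e ∈ SE, e.op ≠ o := by
  intro o ho e heSE heop
  obtain ⟨p0, hpinv⟩ := ho
  obtain ⟨rs, hF'eq, hrsresp, -⟩ := hext
  have heS : e ∈ S := hSE.subset heSE
  have memS_comp : ∀ x : Event, x ∈ S → x ∈ comp F' := by
    intro x hx
    have hx1 : x ∈ proj S x.proc := List.mem_filter.mpr ⟨hx, by simp⟩
    rw [← hequiv x.proc] at hx1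
    exact (List.mem_filter.mp hx1).1
  have hecomp : e ∈ comp F' := memS_comp e heS
  have hhas : hasRes F' o = true := by
    cases e with
    | inv q o' =>
      have h2 := (List.mem_filter.mp hecomp).2
      simp [Event.isInv, Event.op] at h2
      simp [Event.op] at heop
      subst heop
      exact h2
    | res q o' =>
      have hF'mem : Event.res q o' ∈ F' := (List.mem_filter.mp hecomp).1
      simp [Event.op] at heop
      subst heop
      exact List.any_eq_true.mpr ⟨Event.res q o', hF'mem, by simp [Event.isInv, Event.op]⟩
  -- at most one invocation of o in F'
  have countF' : (F'.countP (fun x => x.isInv && x.op == o)) ≤ 1 := by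
    rw [hF'eq, List.countP_append]
    have h0 : rs.countP (fun x => x.isInv && x.op == o) = 0 := by
      rw [List.countP_eq_zero]
      intro x hx
      have hxi := (hrsresp x hx).1
      simp [hxi]
    have h1 := hwf.2.1 o
    omega
  -- uniqueness of the position of the invocation of o in S
  have uniqS : ∀ j k q q', S[(j : ℕ)]? = some (Event.inv q o) →
      S[(k : ℕ)]? = some (Event.inv q' o) → j = k := by
    intro j k q q' hj hk
    by_contra hne
    by_cases hq : q = q'
    · subst hq
      have h2 : 2 ≤ S.countP (fun x => x == Event.inv q o) := by
        rcases Nat.lt_or_ge j k with h | h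
        · exact two_le_countP hj hk h (by simp) (by simp)
        · exact two_le_countP hk hj (by omega) (by simp) (by simp)
      have hc : 2 ≤ List.count (Event.inv q o) S := by
        rw [List.count_eq_countP]; exact h2
      have hcp : 2 ≤ List.count (Event.inv q o) (proj S q) := by
        rw [proj, List.count_filter (by simp [Event.proc])]; exact hc
      rw [← hequiv q] at hcp
      have hcF' : 2 ≤ List.count (Event.inv q o) F' := by
        calc 2 ≤ List.count (Event.inv q o) (proj (comp F') q) := hcp
        _ ≤ List.count (Event.inv q o) (comp F') := List.filter_sublist.count_le _
        _ ≤ List.count (Event.inv q o) F' := List.filter_sublist.count_le _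
      have h3 : 2 ≤ F'.countP (fun x => x.isInv && x.op == o) := by
        calc 2 ≤ List.count (Event.inv q o) F' := hcF'
        _ = F'.countP (fun x => x == Event.inv q o) := List.count_eq_countP
        _ ≤ F'.countP (fun x => x.isInv && x.op == o) := by
            refine List.countP_mono_left ?_
            intro x _ hx
            have hxa : x = Event.inv q o := by simpa using hx
            subst hxa
            simp [Event.isInv, Event.op]
      omega
    · have ha : Event.inv q o ∈ F' := (List.mem_filter.mp (memS_comp _ (List.mem_of_getElem? hj))).1
      have hb : Event.inv q' o ∈ F' := (List.mem_filter.mp (memS_comp _ (List.mem_of_getElem? hk))).1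
      have h2 : 2 ≤ F'.countP (fun x => x.isInv && x.op == o) :=
        two_le_countP_of_ne (by simp [hq]) ha hb
          (by simp [Event.isInv, Event.op]) (by simp [Event.isInv, Event.op])
      omega
  -- find the position k of the invocation of o within SE
  obtain ⟨k', hk'SE⟩ := List.mem_iff_getElem?.mp heSE
  have hk'len : k' < SE.length := (List.getElem?_eq_some_iff.mp hk'SE).1
  obtain ⟨t, hst⟩ := hSE
  have hSk' : S[k']? = some e := by
    rw [← hst, List.getElem?_append_left hk'len]; exact hk'SE
  obtain ⟨k, p1, hkS, hklen⟩ : ∃ k p1, S[k]? = some (Event.inv p1 o) ∧ k < SE.length := by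
    cases e with
    | inv q o' =>
      simp [Event.op] at heop
      rw [heop] at hSk'
      exact ⟨k', q, hSk', hk'len⟩
    | res q o' =>
      simp [Event.op] at heop
      obtain ⟨h1, h2⟩ := Seq.res_has_inv hseq k' q o' hSk'
      rw [heop] at h2
      exact ⟨k' - 1, q, h2, by omega⟩
  -- every operation complete in E has its invocation in S.take k
  have key : ∀ o2, CompleteIn E o2 → ∃ q, Event.inv q o2 ∈ S.take k := by
    intro o2 hc
    obtain ⟨-, q, hresE⟩ := hc
    obtain ⟨i, hiE⟩ := List.mem_iff_getElem?.mp hresE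
    have hiElen : i < E.length := (List.getElem?_eq_some_iff.mp hiE).1
    obtain ⟨j0, hj0⟩ := List.mem_iff_getElem?.mp hpinv
    have hj0len : j0 < E'.length := (List.getElem?_eq_some_iff.mp hj0).1
    have hiF' : F'[i]? = some (Event.res q o2) := by
      rw [hF'eq, hF]
      rw [List.getElem?_append_left (by rw [List.length_append]; omega)]
      rw [List.getElem?_append_left hiElen]; exact hiE
    have hjF' : F'[(E.length + j0)]? = some (Event.inv p0 o) := by
      rw [hF'eq, hF]
      rw [List.getElem?_append_left (by rw [List.length_append]; omega)]
      rw [List.getElem?_append_right (Nat.le_add_right _ _)]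
      have he : E.length + j0 - E.length = j0 := by omega
      rw [he]; exact hj0
    have hprec : prec (comp F') o2 o := by
      obtain ⟨i', j', hij', h1, h2⟩ := filter_prec
        (pred := fun x => !x.isInv || hasRes F' x.op) hiF' hjF' (by omega)
        (by simp [Event.isInv]) (by simp [Event.isInv, Event.op, hhas])
      exact ⟨i', j', q, p0, hij', h1, h2⟩
    obtain ⟨i2, j2, q2, p2, hij2, hres2, hinv2⟩ := hmono _ _ hprec
    have hj2k : j2 = k := uniqS j2 k p2 p1 hinv2 hkS
    obtain ⟨hi2pos, hinvprev⟩ := Seq.res_has_inv hseq i2 q2 o2 hres2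
    refine ⟨q2, ?_⟩
    have hkt : (S.take k)[(i2 - 1)]? = some (Event.inv q2 o2) := by
      rw [List.getElem?_take_of_lt (by omega)]; exact hinvprev
    exact List.mem_of_getElem? hkt
  have hminT := hmin (S.take k) (List.take_prefix k S) key
  have hkSlen : k < S.length := (List.getElem?_eq_some_iff.mp hkS).1
  rw [List.length_take, Nat.min_eq_left (by omega)] at hminT
  omega

end RV
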